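/- Let 𝒞 be a ℂ-linear subspace of the functions D → ℂ invariant under complex conjugation. If f ∈ 𝒞 is complex conjugate phase retrieval in 𝒞, then for all real numbers a and b, the real-valued function g = a·Re(f) + b·Im(f) ∈ Re(𝒞) is phase retrieval in Re(𝒞), i.e. every h ∈ Re(𝒞) with |h(x)| = |g(x)| for all x ∈ D satisfies h = g or h = −g. -/

import Mathlib

open Complex

/-- **Theorem 2.5 (real parts of a conjugate phase retrieval function).**
Let `C` be a ℂ-linear subspace of functions `D → ℂ` invariant under complex conjugation.
If `f ∈ C` is complex conjugate phase retrieval in `C`, then for all `a b : ℝ` the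
real-valued function `g = a • Re f + b • Im f` belongs to `Re(C)` and is phase retrieval
in `Re(C) = {(w + conj w)/2 : w ∈ C}`. -/
theorem stmt_4 {D : Type*} [Nonempty D] (C : Submodule ℂ (D → ℂ))
    (hconj : ∀ f ∈ C, (fun x => (starRingEnd ℂ) (f x)) ∈ C)
    (f : D → ℂ) (hf : f ∈ C)
    (hpr : {g : D → ℂ | g ∈ C ∧ ∀ x, ‖g x‖ = ‖f x‖} =
        {g : D → ℂ | ∃ z : ℂ, ‖z‖ = 1 ∧ g = fun x => z * f x} ∪
        {g : D → ℂ | ∃ z : ℂ, ‖z‖ = 1 ∧ g = fun x => z * (starRingEnd ℂ) (f x)})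
    (a b : ℝ) :
    (fun x => a * (f x).re + b * (f x).im) ∈
        {g : D → ℝ | ∃ w ∈ C, ∀ x, (g x : ℂ) = (w x + (starRingEnd ℂ) (w x)) / 2} ∧
      ∀ h ∈ {g : D → ℝ | ∃ w ∈ C, ∀ x, (g x : ℂ) = (w x + (starRingEnd ℂ) (w x)) / 2},
        (∀ x, |h x| = |a * (f x).re + b * (f x).im|) →
        h = (fun x => a * (f x).re + b * (f x).im) ∨
          h = (fun x => -(a * (f x).re + b * (f x).im)) := by
  classical
  set c : ℂ := (a : ℂ) - b * Complex.I with hc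
  have hFmem : (fun x => c * f x) ∈ C := C.smul_mem c hf
  set F : D → ℂ := fun x => c * f x with hF
  have hFre : ∀ x, (F x).re = a * (f x).re + b * (f x).im := by
    intro x
    simp only [hF, hc, Complex.mul_re, Complex.sub_re, Complex.sub_im, Complex.ofReal_re,
      Complex.ofReal_im, Complex.mul_im, Complex.I_re, Complex.I_im]
    ring
  constructor
  · refine ⟨F, hFmem, fun x => ?_⟩
    show ((a * (f x).re + b * (f x).im : ℝ) : ℂ) = (F x + (starRingEnd ℂ) (F x)) / 2
    rw [← hFre x, Complex.add_conj]
    push_cast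
    ring
  · intro h hh habs
    obtain ⟨v, hv, hhv⟩ := hh
    by_cases hc0 : c = 0
    · have ha : a = 0 := by
        have := congrArg Complex.re hc0
        simpa [hc] using this
      have hb : b = 0 := by
        have := congrArg Complex.im hc0
        simpa [hc] using this
      left
      funext x
      have := habs x
      rw [ha, hb] at this ⊢
      simp only [zero_mul, add_zero, abs_zero] at this ⊢
      exact abs_eq_zero.mp this
    · set m : ℝ := ‖c‖ with hm
      have hm0 : m ≠ 0 := by
        simp [hm, hc0]
      have hmpos : 0 < m := lt_of_le_of_ne (norm_nonneg c) (Ne.symm hm0)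
      -- the auxiliary function u
      set u : D → ℂ := fun x => (h x : ℂ) + ((F x).im : ℂ) * Complex.I with hu
      have humem : u ∈ C := by
        have h1 : (fun x => (starRingEnd ℂ) (v x)) ∈ C := hconj v hv
        have h2 : (fun x => (starRingEnd ℂ) (F x)) ∈ C := hconj F hFmem
        have h3 : ((1/2 : ℂ)) • (v + (fun x => (starRingEnd ℂ) (v x)))
            + ((1/2 : ℂ)) • (F - (fun x => (starRingEnd ℂ) (F x))) ∈ C :=
          C.add_mem (C.smul_mem _ (C.add_mem hv h1)) (C.smul_mem _ (C.sub_mem hFmem h2))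
        convert h3 using 1
        funext x
        have e1 : (h x : ℂ) = (v x + (starRingEnd ℂ) (v x)) / 2 := hhv x
        simp only [hu, Pi.add_apply, Pi.smul_apply, Pi.sub_apply, smul_eq_mul]
        rw [e1, Complex.sub_conj]
        push_cast
        ring
      have hure : ∀ x, (u x).re = h x := by intro x; simp [hu]
      have huim : ∀ x, (u x).im = (F x).im := by intro x; simp [hu]
      have hsq : ∀ x, h x * h x = (F x).re * (F x).re := by
        intro x
        have h1 := habs x
        rw [← hFre x] at h1
        calc h x * h x = |h x| * |h x| := (abs_mul_abs_self _).symm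
          _ = |(F x).re| * |(F x).re| := by rw [h1]
          _ = (F x).re * (F x).re := abs_mul_abs_self _
      have habsu : ∀ x, ‖u x‖ = m * ‖f x‖ := by
        intro x
        have : ‖u x‖ = ‖F x‖ := by
          rw [Complex.norm_def, Complex.norm_def, Complex.normSq_apply, Complex.normSq_apply,
            hure x, huim x, hsq x]
        rw [this, hF]
        simp [hm, norm_mul]
      -- normalize
      set u' : D → ℂ := fun x => ((m : ℂ))⁻¹ * u x with hu'
      have hu'mem : u' ∈ C := by
        have := C.smul_mem ((m : ℂ))⁻¹ humem
        convert this using 1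
        rfl
      have hu'abs : ∀ x, ‖u' x‖ = ‖f x‖ := by
        intro x
        simp only [hu', norm_mul, norm_inv, Complex.norm_real, Real.norm_eq_abs, abs_of_pos hmpos, habsu x]
        field_simp
      have hmem : u' ∈ {g : D → ℂ | ∃ z : ℂ, ‖z‖ = 1 ∧ g = fun x => z * f x} ∪
          {g : D → ℂ | ∃ z : ℂ, ‖z‖ = 1 ∧ g = fun x => z * (starRingEnd ℂ) (f x)} := by
        rw [← hpr]; exact ⟨hu'mem, hu'abs⟩
      -- key pointwise facts
      have hFdecomp : ∀ x, F x = ((F x).re : ℂ) + ((F x).im : ℂ) * Complex.I := by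
        intro x; exact (Complex.re_add_im (F x)).symm
      rcases hmem with ⟨z, hz1, hz2⟩ | ⟨z, hz1, hz2⟩
      · -- u = m z f ; set ζ = m z / c
        set ζ : ℂ := (m : ℂ) * z / c with hζ
        have hζabs : ‖ζ‖ = 1 := by
          rw [hζ, norm_div, norm_mul, Complex.norm_real, Real.norm_eq_abs, abs_of_pos hmpos, hz1, ← hm]
          field_simp
        have key : ∀ x, (h x : ℂ) + ((F x).im : ℂ) * Complex.I
            = ζ * (((F x).re : ℂ) + ((F x).im : ℂ) * Complex.I) := by
          intro x
          have e1 : u' x = z * f x := congrFun hz2 x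
          have e2 : u x = (m : ℂ) * z * f x := by
            rw [hu'] at e1
            have hmne : ((m : ℂ)) ≠ 0 := by exact_mod_cast hm0
            field_simp at e1
            linear_combination e1
          have e3 : ζ * F x = (m : ℂ) * z * f x := by
            rw [hF, hζ]
            field_simp
          calc (h x : ℂ) + ((F x).im : ℂ) * Complex.I = u x := rfl
            _ = ζ * F x := by rw [e2, e3]
            _ = ζ * (((F x).re : ℂ) + ((F x).im : ℂ) * Complex.I) := by rw [← hFdecomp x]
        have hst : ζ.re * ζ.re + ζ.im * ζ.im = 1 := by
          have := Complex.sq_norm ζ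
          rw [hζabs, Complex.normSq_apply] at this
          linarith [this]
        have hre : ∀ x, h x = ζ.re * (F x).re - ζ.im * (F x).im := by
          intro x
          have := congrArg Complex.re (key x)
          simpa [Complex.mul_re] using this
        have him : ∀ x, (F x).im = ζ.re * (F x).im + ζ.im * (F x).re := by
          intro x
          have := congrArg Complex.im (key x)
          simpa [Complex.mul_im] using this
        by_cases ht : ζ.im = 0
        · have hs : ζ.re = 1 ∨ ζ.re = -1 := by
            exact mul_self_eq_one_iff.mp (by rw [ht] at hst; nlinarith [hst])
          rcases hs with hs | hs
          · left; funext x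
            show h x = a * (f x).re + b * (f x).im
            rw [← hFre x]
            rw [hre x, hs, ht]; ring
          · right; funext x
            show h x = -(a * (f x).re + b * (f x).im)
            rw [← hFre x]
            rw [hre x, hs, ht]; ring
        · right
          funext x
          show h x = -(a * (f x).re + b * (f x).im)
          rw [← hFre x]
          have e1 := hre x
          have e2 := him x
          have : ζ.im * (h x + (F x).re) = 0 := by
            linear_combination ζ.im * e1 - (1 + ζ.re) * e2 - (F x).im * hst
          have := (mul_eq_zero.mp this).resolve_left ht
          linarith
      · -- u = m z conj f ; set ζ = m z / conj c
        set ζ : ℂ := (m : ℂ) * z / (starRingEnd ℂ) c with hζ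
        have hcc : (starRingEnd ℂ) c ≠ 0 := by
          simpa using hc0
        have hζabs : ‖ζ‖ = 1 := by
          rw [hζ, norm_div, norm_mul, Complex.norm_real, Real.norm_eq_abs, abs_of_pos hmpos, hz1,
            Complex.norm_conj, ← hm]
          field_simp
        have key : ∀ x, (h x : ℂ) + ((F x).im : ℂ) * Complex.I
            = ζ * (((F x).re : ℂ) - ((F x).im : ℂ) * Complex.I) := by
          intro x
          have e1 : u' x = z * (starRingEnd ℂ) (f x) := congrFun hz2 x
          have e2 : u x = (m : ℂ) * z * (starRingEnd ℂ) (f x) := by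
            rw [hu'] at e1
            have hmne : ((m : ℂ)) ≠ 0 := by exact_mod_cast hm0
            field_simp at e1
            linear_combination e1
          have e4 : (starRingEnd ℂ) (F x) = (starRingEnd ℂ) c * (starRingEnd ℂ) (f x) := by
            rw [hF]; exact map_mul _ _ _
          have e5 : (starRingEnd ℂ) (F x) = ((F x).re : ℂ) - ((F x).im : ℂ) * Complex.I := by
            simp [Complex.ext_iff]
          calc (h x : ℂ) + ((F x).im : ℂ) * Complex.I = u x := rfl
            _ = ζ * ((starRingEnd ℂ) (F x)) := by
                rw [e2, e4, hζ]
                field_simp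
            _ = ζ * (((F x).re : ℂ) - ((F x).im : ℂ) * Complex.I) := by rw [e5]
        have hst : ζ.re * ζ.re + ζ.im * ζ.im = 1 := by
          have := Complex.sq_norm ζ
          rw [hζabs, Complex.normSq_apply] at this
          linarith [this]
        have hre : ∀ x, h x = ζ.re * (F x).re + ζ.im * (F x).im := by
          intro x
          have := congrArg Complex.re (key x)
          simp [Complex.mul_re] at this
          linarith [this]
        have him : ∀ x, (F x).im = ζ.im * (F x).re - ζ.re * (F x).im := by
          intro x
          have := congrArg Complex.im (key x)
          simp [Complex.mul_im] at this
          linarith [this]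
        by_cases ht : ζ.im = 0
        · have hs : ζ.re = 1 ∨ ζ.re = -1 :=
            mul_self_eq_one_iff.mp (by rw [ht] at hst; nlinarith [hst])
          rcases hs with hs | hs
          · left; funext x
            show h x = a * (f x).re + b * (f x).im
            rw [← hFre x]
            rw [hre x, hs, ht]; ring
          · right; funext x
            show h x = -(a * (f x).re + b * (f x).im)
            rw [← hFre x]
            rw [hre x, hs, ht]; ring
        · left
          funext x
          show h x = a * (f x).re + b * (f x).im
          rw [← hFre x]
          have e1 := hre x
          have e2 := him x
          have : ζ.im * (h x - (F x).re) = 0 := by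
            linear_combination ζ.im * e1 + (1 - ζ.re) * e2 + (F x).im * hst
          have := (mul_eq_zero.mp this).resolve_left ht
          linarith
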